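/- Assume n ≤ m. The quasi-invariant q³ = (z^N + w^N)^{2n+1}·(z^N − w^N)^{2m+1} is annihilated by the Calogero–Moser operator 𝓛₁, i.e. the polynomial identity (∏_{k=0}^{2N−1}(ε^k·w − z))·∂z∂w q³ = ∑_{k=0}^{2N−1} m_k·(∏_{0≤j≤2N−1, j≠k}(ε^j·w − z))·(ε^k·∂z q³ − ∂w q³) holds in R. -/

import Mathlib

open MvPolynomial Finset
section PHom
open Finset in

open Finset
lemma prod_sub_pow (M : ℕ) (hM : 0 < M) {ζ : ℂ} (hζ : IsPrimitiveRoot ζ M) (t : ℂ) :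
    ∏ j ∈ Finset.range M, (t - ζ ^ j) = t ^ M - 1 := by
  have h := X_pow_sub_C_eq_prod hζ hM (one_pow M)
  have h2 := congrArg (Polynomial.eval t) h
  simp only [Polynomial.eval_sub, Polynomial.eval_pow, Polynomial.eval_X, Polynomial.eval_C,
    Polynomial.eval_prod, Polynomial.eval_mul, Polynomial.eval_one, mul_one] at h2
  exact h2.symm

lemma prod_hom (M : ℕ) (hM : 0 < M) {ζ : ℂ} (hζ : IsPrimitiveRoot ζ M) (x y : ℂ) :
    ∏ j ∈ Finset.range M, (ζ ^ j * y - x) = (-1) ^ M * (x ^ M - y ^ M) := by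
  rcases eq_or_ne y 0 with rfl | hy
  · simp only [mul_zero, zero_sub, Finset.prod_const, Finset.card_range]
    rw [neg_pow, zero_pow hM.ne']
    ring
  · have h := prod_sub_pow M hM hζ (x / y)
    have e1 : ∏ j ∈ Finset.range M, (ζ ^ j * y - x)
        = ∏ j ∈ Finset.range M, ((-y) * (x / y - ζ ^ j)) := by
      apply Finset.prod_congr rfl
      intro j _
      field_simp
      ring
    rw [e1, Finset.prod_mul_distrib, prod_const, card_range, h, neg_pow]
    field_simp
    rw [div_pow, mul_sub, mul_div_assoc', mul_comm (y ^ M) (x ^ M), mul_div_assoc,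
      div_self (pow_ne_zero _ hy), mul_one, mul_one]
end PHom


noncomputable section

/-- The polynomial ring `R = ℂ[z,w]`. -/
abbrev R2 : Type := MvPolynomial (Fin 2) ℂ

/-- `z`, the first variable. -/
def zP : R2 := X 0

/-- `w`, the second variable (playing the role of `z̄`). -/
def wP : R2 := X 1

/-- `ε = exp(πi/N)`, a primitive `2N`-th root of unity. -/
def eps (N : ℕ) : ℂ := Complex.exp ((Real.pi : ℂ) * Complex.I / (N : ℂ))

/-- The reflection `σⱼ : z ↦ ε^j w, w ↦ ε^{-j} z` as a `ℂ`-algebra endomorphism. -/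
def dihRefl (N j : ℕ) : R2 →ₐ[ℂ] R2 :=
  aeval (fun k : Fin 2 => if k = 0 then C (eps N ^ j) * X 1 else C (eps N ^ (-(j : ℤ))) * X 0)

/-- The multiplicity `mⱼ`: `m` for even `j`, `n` for odd `j`. -/
def mult (m n j : ℕ) : ℕ := if Even j then m else n

/-- Quasi-invariance for the dihedral system `I₂(2N)` with multiplicities `(m,n)`. -/
def IsQuasiInv (N m n : ℕ) (p : R2) : Prop :=
  ∀ j < 2 * N, (zP - C (eps N ^ j) * wP) ^ (2 * mult m n j + 1) ∣ dihRefl N j p - p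

/-- `p` is annihilated by the Calogero–Moser operator
`𝓛₁ = 4∂z∂w − 4∑ₖ mₖ(ε^k ∂z − ∂w)/(ε^k w − z)`, expressed as a polynomial identity
after clearing denominators. -/
def AnnL1 (N m n : ℕ) (p : R2) : Prop :=
  (∏ k ∈ Finset.range (2 * N), (C (eps N ^ k) * wP - zP)) *
      (pderiv (0 : Fin 2) (pderiv (1 : Fin 2) p)) =
    ∑ k ∈ Finset.range (2 * N),
      C ((mult m n k : ℕ) : ℂ) *
        (∏ j ∈ (Finset.range (2 * N)).erase k, (C (eps N ^ j) * wP - zP)) *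
        (C (eps N ^ k) * pderiv (0 : Fin 2) p - pderiv (1 : Fin 2) p)


lemma eps_sq_prim (N : ℕ) (hN : 1 ≤ N) : IsPrimitiveRoot (eps N ^ 2) N := by
  have h := Complex.isPrimitiveRoot_exp N (by omega)
  have : eps N ^ 2 = Complex.exp (2 * Real.pi * Complex.I / N) := by
    rw [eps, ← Complex.exp_nat_mul]
    norm_num
    ring_nf
  rwa [this]

lemma eps_pow_N (N : ℕ) (hN : 1 ≤ N) : eps N ^ N = -1 := by
  have hN0 : (N : ℂ) ≠ 0 := Nat.cast_ne_zero.mpr (by omega)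
  rw [eps, ← Complex.exp_nat_mul]
  rw [show (N : ℂ) * ((Real.pi : ℂ) * Complex.I / N) = (Real.pi : ℂ) * Complex.I by
    field_simp]
  exact Complex.exp_pi_mul_I

lemma Qe_eq (N : ℕ) (hN : 1 ≤ N) :
    ∏ j ∈ Finset.range N, (C (eps N ^ (2 * j)) * wP - zP)
      = C ((-1 : ℂ) ^ N) * (zP ^ N - wP ^ N) := by
  apply MvPolynomial.funext
  intro x
  have h := prod_hom N hN (eps_sq_prim N hN) (x 0) (x 1)
  simp only [map_prod, map_sub, map_mul, map_pow, eval_C, eval_X, zP, wP, map_add]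
  calc ∏ j ∈ Finset.range N, (eps N ^ (2 * j) * x 1 - x 0)
      = ∏ j ∈ Finset.range N, ((eps N ^ 2) ^ j * x 1 - x 0) := by
        apply Finset.prod_congr rfl; intro j _; rw [← pow_mul]
    _ = (-1) ^ N * (x 0 ^ N - x 1 ^ N) := h

lemma Qo_eq (N : ℕ) (hN : 1 ≤ N) :
    ∏ j ∈ Finset.range N, (C (eps N ^ (2 * j + 1)) * wP - zP)
      = C ((-1 : ℂ) ^ N) * (zP ^ N + wP ^ N) := by
  apply MvPolynomial.funext
  intro x
  have h := prod_hom N hN (eps_sq_prim N hN) (x 0) (eps N * x 1)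
  simp only [map_prod, map_sub, map_mul, map_pow, eval_C, eval_X, zP, wP, map_add]
  calc ∏ j ∈ Finset.range N, (eps N ^ (2 * j + 1) * x 1 - x 0)
      = ∏ j ∈ Finset.range N, ((eps N ^ 2) ^ j * (eps N * x 1) - x 0) := by
        apply Finset.prod_congr rfl; intro j _; rw [← pow_mul, pow_succ]; ring
    _ = (-1) ^ N * (x 0 ^ N - (eps N * x 1) ^ N) := h
    _ = (-1) ^ N * (x 0 ^ N + x 1 ^ N) := by
        rw [mul_pow, eps_pow_N N hN]; ring

lemma pderiv_finset_prod {ι : Type*} [DecidableEq ι] (i : Fin 2) (s : Finset ι) (f : ι → R2) :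
    pderiv i (∏ k ∈ s, f k) = ∑ k ∈ s, (∏ j ∈ s.erase k, f j) * pderiv i (f k) := by
  classical
  induction s using Finset.induction_on with
  | empty => simp
  | @insert a s ha ih =>
    rw [Finset.prod_insert ha, pderiv_mul, ih, Finset.sum_insert ha, Finset.erase_insert ha,
      Finset.mul_sum]
    congr 1
    · ring
    apply Finset.sum_congr rfl
    intro k hk
    rw [Finset.erase_insert_of_ne (by rintro rfl; exact ha hk),
      Finset.prod_insert (by simp [Finset.mem_erase] at *; tauto)]
    ring

lemma sum_even_odd {β : Type*} [AddCommMonoid β] (f : ℕ → β) (N : ℕ) :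
    ∑ k ∈ Finset.range (2 * N), f k
      = (∑ j ∈ Finset.range N, f (2 * j)) + ∑ j ∈ Finset.range N, f (2 * j + 1) := by
  induction N with
  | zero => simp
  | succ p ih =>
    rw [show 2 * (p + 1) = (2 * p) + 1 + 1 by ring, Finset.sum_range_succ, Finset.sum_range_succ,
      ih, Finset.sum_range_succ, Finset.sum_range_succ]
    abel

lemma prod_even_odd (f : ℕ → R2) (N : ℕ) :
    ∏ k ∈ Finset.range (2 * N), f k
      = (∏ j ∈ Finset.range N, f (2 * j)) * ∏ j ∈ Finset.range N, f (2 * j + 1) := by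
  induction N with
  | zero => simp
  | succ p ih =>
    rw [show 2 * (p + 1) = (2 * p) + 1 + 1 by ring, Finset.prod_range_succ, Finset.prod_range_succ,
      ih, Finset.prod_range_succ, Finset.prod_range_succ]
    ring

lemma factor_ne_zero (c : ℂ) : C c * wP - zP ≠ 0 := by
  intro h
  have := congrArg (eval (fun k : Fin 2 => if k = 0 then (1 : ℂ) else 0)) h
  simp [zP, wP] at this

@[simp] lemma pd0z : pderiv (0 : Fin 2) zP = 1 := by simp [zP]
@[simp] lemma pd1z : pderiv (1 : Fin 2) zP = 0 := by simp [zP]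
@[simp] lemma pd0w : pderiv (0 : Fin 2) wP = 0 := by simp [wP]
@[simp] lemma pd1w : pderiv (1 : Fin 2) wP = 1 := by simp [wP]

lemma pd0_factor (c : ℂ) : pderiv (0 : Fin 2) (C c * wP - zP) = -1 := by
  simp [pderiv_C_mul]
lemma pd1_factor (c : ℂ) : pderiv (1 : Fin 2) (C c * wP - zP) = C c := by
  simp [pderiv_C_mul]

lemma Se0 (N : ℕ) (hN : 1 ≤ N) :
    ∑ j ∈ Finset.range N, ∏ i ∈ (Finset.range N).erase j, (C (eps N ^ (2 * i)) * wP - zP)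
      = -(C ((-1 : ℂ) ^ N) * ((N : R2) * zP ^ (N - 1))) := by
  have h := congrArg (pderiv (0 : Fin 2)) (Qe_eq N hN)
  rw [pderiv_finset_prod] at h
  simp only [pd0_factor, pderiv_C_mul, map_sub, pderiv_pow, pd0z, pd0w, mul_one, mul_zero,
    zero_mul, zero_sub, mul_neg_one, sub_zero, Finset.sum_neg_distrib] at h
  linear_combination -h

lemma Se1 (N : ℕ) (hN : 1 ≤ N) :
    ∑ j ∈ Finset.range N,
        (∏ i ∈ (Finset.range N).erase j, (C (eps N ^ (2 * i)) * wP - zP)) * C (eps N ^ (2 * j))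
      = -(C ((-1 : ℂ) ^ N) * ((N : R2) * wP ^ (N - 1))) := by
  have h := congrArg (pderiv (1 : Fin 2)) (Qe_eq N hN)
  rw [pderiv_finset_prod] at h
  simp only [pd1_factor, pderiv_C_mul, map_sub, pderiv_pow, pd1z, pd1w, mul_one, mul_zero,
    zero_mul, zero_sub, sub_zero, mul_neg] at h
  linear_combination h

lemma So0 (N : ℕ) (hN : 1 ≤ N) :
    ∑ j ∈ Finset.range N, ∏ i ∈ (Finset.range N).erase j, (C (eps N ^ (2 * i + 1)) * wP - zP)
      = -(C ((-1 : ℂ) ^ N) * ((N : R2) * zP ^ (N - 1))) := by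
  have h := congrArg (pderiv (0 : Fin 2)) (Qo_eq N hN)
  rw [pderiv_finset_prod] at h
  simp only [pd0_factor, pderiv_C_mul, map_add, pderiv_pow, pd0z, pd0w, mul_one, mul_zero,
    zero_mul, zero_sub, sub_zero, mul_neg_one, add_zero, Finset.sum_neg_distrib] at h
  linear_combination -h

lemma So1 (N : ℕ) (hN : 1 ≤ N) :
    ∑ j ∈ Finset.range N,
        (∏ i ∈ (Finset.range N).erase j, (C (eps N ^ (2 * i + 1)) * wP - zP)) *
          C (eps N ^ (2 * j + 1))
      = C ((-1 : ℂ) ^ N) * ((N : R2) * wP ^ (N - 1)) := by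
  have h := congrArg (pderiv (1 : Fin 2)) (Qo_eq N hN)
  rw [pderiv_finset_prod] at h
  simp only [pd1_factor, pderiv_C_mul, map_add, pderiv_pow, pd1z, pd1w, mul_one, mul_zero,
    zero_mul, zero_add, zero_sub, sub_zero] at h
  linear_combination h

lemma erase_split_even (N j : ℕ) (hj : j < N) (f : ℕ → R2) (hf : f (2 * j) ≠ 0) :
    ∏ i ∈ (Finset.range (2 * N)).erase (2 * j), f i
      = (∏ i ∈ Finset.range N, f (2 * i + 1)) * ∏ i ∈ (Finset.range N).erase j, f (2 * i) := by
  apply mul_right_cancel₀ hf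
  rw [Finset.prod_erase_mul _ _ (by rw [Finset.mem_range]; omega), mul_assoc,
    Finset.prod_erase_mul _ _ (Finset.mem_range.mpr hj), prod_even_odd]
  ring

lemma erase_split_odd (N j : ℕ) (hj : j < N) (f : ℕ → R2) (hf : f (2 * j + 1) ≠ 0) :
    ∏ i ∈ (Finset.range (2 * N)).erase (2 * j + 1), f i
      = (∏ i ∈ Finset.range N, f (2 * i)) * ∏ i ∈ (Finset.range N).erase j, f (2 * i + 1) := by
  apply mul_right_cancel₀ hf
  rw [Finset.prod_erase_mul _ _ (by rw [Finset.mem_range]; omega), mul_assoc,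
    Finset.prod_erase_mul _ _ (Finset.mem_range.mpr hj), prod_even_odd]


@[simp] lemma pd_natCast (i : Fin 2) (k : ℕ) : pderiv i ((k : ℕ) : R2) = 0 := by
  have : ((k : ℕ) : R2) = C ((k : ℕ) : ℂ) := by simp
  rw [this, pderiv_C]

lemma Dz_closed (N n m : ℕ) :
    pderiv (0 : Fin 2) ((zP ^ N + wP ^ N) ^ (2 * n + 1) * (zP ^ N - wP ^ N) ^ (2 * m + 1))
      = (N : R2) * zP ^ (N - 1) *
          (((2 * n + 1 : ℕ) : R2) * (zP ^ N + wP ^ N) ^ (2 * n) * (zP ^ N - wP ^ N) ^ (2 * m + 1)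
            + ((2 * m + 1 : ℕ) : R2) * (zP ^ N + wP ^ N) ^ (2 * n + 1) * (zP ^ N - wP ^ N) ^ (2 * m)) := by
  simp only [pderiv_mul, pderiv_pow, map_add, map_sub, pd0z, pd0w, mul_zero, add_zero,
    zero_mul, mul_one, sub_zero, Nat.add_sub_cancel]
  push_cast
  ring

lemma Dw_closed (N n m : ℕ) :
    pderiv (1 : Fin 2) ((zP ^ N + wP ^ N) ^ (2 * n + 1) * (zP ^ N - wP ^ N) ^ (2 * m + 1))
      = (N : R2) * wP ^ (N - 1) *
          (((2 * n + 1 : ℕ) : R2) * (zP ^ N + wP ^ N) ^ (2 * n) * (zP ^ N - wP ^ N) ^ (2 * m + 1)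
            - ((2 * m + 1 : ℕ) : R2) * (zP ^ N + wP ^ N) ^ (2 * n + 1) * (zP ^ N - wP ^ N) ^ (2 * m)) := by
  simp only [pderiv_mul, pderiv_pow, map_add, map_sub, pd1z, pd1w, mul_zero, add_zero,
    zero_mul, mul_one, zero_add, zero_sub, sub_zero, Nat.add_sub_cancel]
  push_cast
  ring

lemma D2_closed (N n m : ℕ) :
    (zP ^ N - wP ^ N) * ((zP ^ N + wP ^ N) * pderiv (0 : Fin 2)
        ((N : R2) * wP ^ (N - 1) *
          (((2 * n + 1 : ℕ) : R2) * (zP ^ N + wP ^ N) ^ (2 * n) * (zP ^ N - wP ^ N) ^ (2 * m + 1)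
            - ((2 * m + 1 : ℕ) : R2) * (zP ^ N + wP ^ N) ^ (2 * n + 1) * (zP ^ N - wP ^ N) ^ (2 * m))))
      = (N : R2) ^ 2 * zP ^ (N - 1) * wP ^ (N - 1) *
          ((((2 * n + 1) * (2 * n) : ℕ) : R2) * (zP ^ N + wP ^ N) ^ (2 * n) * (zP ^ N - wP ^ N) ^ (2 * m + 2)
            - (((2 * m + 1) * (2 * m) : ℕ) : R2) * (zP ^ N + wP ^ N) ^ (2 * n + 2) * (zP ^ N - wP ^ N) ^ (2 * m)) := by
  rcases n with _ | p <;> rcases m with _ | r <;>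
    simp only [Nat.mul_zero, pow_zero, Nat.zero_sub, Nat.sub_zero,
      show ∀ p : ℕ, 2 * (p + 1) = 2 * p + 1 + 1 from fun p => by ring,
      pderiv_mul, pderiv_pow, map_add, map_sub, pd0z, pd0w, pd_natCast, mul_zero, add_zero,
      zero_mul, mul_one, one_mul, zero_add, zero_sub, sub_zero, Nat.add_sub_cancel] <;>
    push_cast <;>
    ring

theorem q3_mHarmonic_L1 (N m n : ℕ) (hN : 1 ≤ N) (hnm : n ≤ m) :
    AnnL1 N m n ((zP ^ N + wP ^ N) ^ (2 * n + 1) * (zP ^ N - wP ^ N) ^ (2 * m + 1)) := by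
  unfold AnnL1
  rw [prod_even_odd (fun k => C (eps N ^ k) * wP - zP) N, sum_even_odd]
  have hme : ∀ j : ℕ, mult m n (2 * j) = m := fun j => if_pos (even_two_mul j)
  have hmo : ∀ j : ℕ, mult m n (2 * j + 1) = n := fun j =>
    if_neg (by simp [Nat.even_add_one, Nat.even_mul])
  have hEsum : ∀ P Q : R2,
      ∑ j ∈ Finset.range N,
          (C ((mult m n (2 * j) : ℕ) : ℂ) *
              ∏ i ∈ (Finset.range (2 * N)).erase (2 * j), (C (eps N ^ i) * wP - zP)) *
            (C (eps N ^ (2 * j)) * P - Q)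
        = (C ((m : ℕ) : ℂ) * (∏ i ∈ Finset.range N, (C (eps N ^ (2 * i + 1)) * wP - zP)) * P) *
              (-(C ((-1 : ℂ) ^ N) * ((N : R2) * wP ^ (N - 1))))
            - (C ((m : ℕ) : ℂ) * (∏ i ∈ Finset.range N, (C (eps N ^ (2 * i + 1)) * wP - zP)) * Q) *
              (-(C ((-1 : ℂ) ^ N) * ((N : R2) * zP ^ (N - 1)))) := by
    intro P Q
    calc ∑ j ∈ Finset.range N,
          (C ((mult m n (2 * j) : ℕ) : ℂ) *
              ∏ i ∈ (Finset.range (2 * N)).erase (2 * j), (C (eps N ^ i) * wP - zP)) *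
            (C (eps N ^ (2 * j)) * P - Q)
        = ∑ j ∈ Finset.range N,
            ((C ((m : ℕ) : ℂ) * (∏ i ∈ Finset.range N, (C (eps N ^ (2 * i + 1)) * wP - zP)) * P) *
                ((∏ i ∈ (Finset.range N).erase j, (C (eps N ^ (2 * i)) * wP - zP)) *
                  C (eps N ^ (2 * j)))
              - (C ((m : ℕ) : ℂ) * (∏ i ∈ Finset.range N, (C (eps N ^ (2 * i + 1)) * wP - zP)) * Q) *
                ∏ i ∈ (Finset.range N).erase j, (C (eps N ^ (2 * i)) * wP - zP)) := by
          refine Finset.sum_congr rfl fun j hj => ?_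
          rw [hme, erase_split_even N j (Finset.mem_range.mp hj) _ (factor_ne_zero _)]
          ring
      _ = _ := by
          rw [Finset.sum_sub_distrib, ← Finset.mul_sum, ← Finset.mul_sum, Se1 N hN, Se0 N hN]
  have hOsum : ∀ P Q : R2,
      ∑ j ∈ Finset.range N,
          (C ((mult m n (2 * j + 1) : ℕ) : ℂ) *
              ∏ i ∈ (Finset.range (2 * N)).erase (2 * j + 1), (C (eps N ^ i) * wP - zP)) *
            (C (eps N ^ (2 * j + 1)) * P - Q)
        = (C ((n : ℕ) : ℂ) * (∏ i ∈ Finset.range N, (C (eps N ^ (2 * i)) * wP - zP)) * P) *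
              (C ((-1 : ℂ) ^ N) * ((N : R2) * wP ^ (N - 1)))
            - (C ((n : ℕ) : ℂ) * (∏ i ∈ Finset.range N, (C (eps N ^ (2 * i)) * wP - zP)) * Q) *
              (-(C ((-1 : ℂ) ^ N) * ((N : R2) * zP ^ (N - 1)))) := by
    intro P Q
    calc ∑ j ∈ Finset.range N,
          (C ((mult m n (2 * j + 1) : ℕ) : ℂ) *
              ∏ i ∈ (Finset.range (2 * N)).erase (2 * j + 1), (C (eps N ^ i) * wP - zP)) *
            (C (eps N ^ (2 * j + 1)) * P - Q)
        = ∑ j ∈ Finset.range N,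
            ((C ((n : ℕ) : ℂ) * (∏ i ∈ Finset.range N, (C (eps N ^ (2 * i)) * wP - zP)) * P) *
                ((∏ i ∈ (Finset.range N).erase j, (C (eps N ^ (2 * i + 1)) * wP - zP)) *
                  C (eps N ^ (2 * j + 1)))
              - (C ((n : ℕ) : ℂ) * (∏ i ∈ Finset.range N, (C (eps N ^ (2 * i)) * wP - zP)) * Q) *
                ∏ i ∈ (Finset.range N).erase j, (C (eps N ^ (2 * i + 1)) * wP - zP)) := by
          refine Finset.sum_congr rfl fun j hj => ?_
          rw [hmo, erase_split_odd N j (Finset.mem_range.mp hj) _ (factor_ne_zero _)]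
          ring
      _ = _ := by
          rw [Finset.sum_sub_distrib, ← Finset.mul_sum, ← Finset.mul_sum, So1 N hN, So0 N hN]
  rw [hEsum, hOsum, Qe_eq N hN, Qo_eq N hN, Dz_closed N n m, Dw_closed N n m]
  have hD2 := D2_closed N n m
  simp only [map_natCast] at hD2 ⊢
  push_cast at hD2 ⊢
  linear_combination (C ((-1 : ℂ) ^ N) * C ((-1 : ℂ) ^ N)) * hD2
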